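/- Let μ⁰ = Σ_{n=1}^{N₀} p⁰ₙ δ_{x⁰ₙ} and μʲ = Σ_{m=1}^{Nⱼ} pʲₘ δ_{xʲₘ} be discrete positive measures on ℝ^d, λ ≥ 0, and let γ be an optimal partial coupling for OPT_λ(μ⁰,μʲ). Let p̂ₙ = Σ_{m=1}^{Nⱼ} γₙₘ and let x̂ₙ be the OPT barycentric points (x̂ₙ = (1/p̂ₙ) Σₘ γₙₘ xʲₘ if p̂ₙ > 0, and x̂ₙ = x⁰ₙ if p̂ₙ = 0). Then the map x⁰ₙ ↦ x̂ₙ solves OPT_λ(μ⁰,μ̂ʲ), where μ̂ʲ = Σ_{n=1}^{N₀} p̂ₙ δ_{x̂ₙ}: the diagonal matrix diag(p̂₁,…,p̂_{N₀}) is an optimal partial coupling for OPT_λ(μ⁰,μ̂ʲ), i.e. for every matrix γ̂ ∈ ℝ^{N₀×N₀} with nonnegative entries, row sums ≤ p⁰ entrywise and column sums ≤ p̂ entrywise, one has Σ_{n=1}^{N₀} p̂ₙ ‖x⁰ₙ − x̂ₙ‖² + λ(|p⁰| + |p̂| − 2|p̂|) ≤ Σ_{n,k=1}^{N₀} ‖x⁰ₙ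 − x̂ₖ‖² γ̂ₙₖ + λ(|p⁰| + |p̂| − 2|γ̂|). -/

import Mathlib

open scoped BigOperators

/-- A partial coupling between discrete positive measures with weight vectors `p`
and `q`: a nonnegative matrix whose row sums are `≤ p` and column sums are `≤ q`. -/
def IsPartialCouplingMat {N M : ℕ} (p : Fin N → ℝ) (q : Fin M → ℝ)
    (γ : Matrix (Fin N) (Fin M) ℝ) : Prop :=
  (∀ n m, 0 ≤ γ n m) ∧ (∀ n, ∑ m, γ n m ≤ p n) ∧ (∀ m, ∑ n, γ n m ≤ q m)

/-- The discrete partial transport cost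
`C_λ(γ) = Σ ‖xₙ − yₘ‖² γₙₘ + λ(|p| + |q| − 2|γ|)`. -/
noncomputable def partialCostMat {d N M : ℕ} (lam : ℝ) (p : Fin N → ℝ) (q : Fin M → ℝ)
    (x : Fin N → EuclideanSpace ℝ (Fin d)) (y : Fin M → EuclideanSpace ℝ (Fin d))
    (γ : Matrix (Fin N) (Fin M) ℝ) : ℝ :=
  (∑ n, ∑ m, ‖x n - y m‖ ^ 2 * γ n m) +
    lam * ((∑ n, p n) + (∑ m, q m) - 2 * ∑ n, ∑ m, γ n m)

/-- If `γ` is an optimal partial coupling for `OPT_λ(μ⁰,μʲ)`, then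
the diagonal matrix `diag(p̂)` is an optimal partial coupling for `OPT_λ(μ⁰,μ̂ʲ)`,
where `p̂ₙ = Σₘ γₙₘ` and `x̂ₙ` are the OPT barycentric points. -/
lemma variance_decomp {d M : ℕ} (w : Fin M → ℝ) (b : Fin M → EuclideanSpace ℝ (Fin d))
    (a c : EuclideanSpace ℝ (Fin d)) (h : (∑ m, w m) • c = ∑ m, w m • b m) :
    ∑ m, ‖a - b m‖ ^ 2 * w m
      = (∑ m, w m) * ‖a - c‖ ^ 2 + ∑ m, ‖c - b m‖ ^ 2 * w m := by
  have expand : ∀ m, ‖a - b m‖ ^ 2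
      = ‖a - c‖ ^ 2 + 2 * (inner ℝ (a - c) (c - b m) : ℝ) + ‖c - b m‖ ^ 2 := by
    intro m
    have h2 : a - b m = (a - c) + (c - b m) := by abel
    rw [h2, norm_add_sq_real]
  have hzero : ∑ m, w m • (c - b m) = (0 : EuclideanSpace ℝ (Fin d)) := by
    simp only [smul_sub]
    rw [Finset.sum_sub_distrib, ← Finset.sum_smul, ← h]
    abel
  have cross : ∑ m, (inner ℝ (a - c) (c - b m) : ℝ) * w m = 0 := by
    calc ∑ m, (inner ℝ (a - c) (c - b m) : ℝ) * w m
        = (inner ℝ (a - c) (∑ m, w m • (c - b m)) : ℝ) := by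
          rw [inner_sum]
          refine Finset.sum_congr rfl fun m _ => ?_
          rw [real_inner_smul_right]; ring
      _ = 0 := by rw [hzero, inner_zero_right]
  calc ∑ m, ‖a - b m‖ ^ 2 * w m
      = ∑ m, ((‖a - c‖ ^ 2 + 2 * (inner ℝ (a - c) (c - b m) : ℝ) + ‖c - b m‖ ^ 2) * w m) := by
        refine Finset.sum_congr rfl fun m _ => ?_; rw [expand m]
    _ = (∑ m, w m) * ‖a - c‖ ^ 2 + 2 * (∑ m, (inner ℝ (a - c) (c - b m) : ℝ) * w m)
        + ∑ m, ‖c - b m‖ ^ 2 * w m := by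
        simp only [add_mul, Finset.sum_add_distrib, Finset.mul_sum]
        congr 1
        congr 1
        · rw [Finset.sum_mul]
          exact Finset.sum_congr rfl fun m _ => mul_comm _ _
        · exact Finset.sum_congr rfl fun m _ => by ring
    _ = (∑ m, w m) * ‖a - c‖ ^ 2 + ∑ m, ‖c - b m‖ ^ 2 * w m := by
        rw [cross]; ring

theorem opt_barycentric_projection_diag_optimal
    {d N0 Nj : ℕ}
    (lam : ℝ) (hlam : 0 ≤ lam)
    (p0 : Fin N0 → ℝ) (pj : Fin Nj → ℝ)
    (x0 : Fin N0 → EuclideanSpace ℝ (Fin d)) (xj : Fin Nj → EuclideanSpace ℝ (Fin d))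
    (hp0 : ∀ n, 0 < p0 n) (hpj : ∀ m, 0 < pj m)
    (γ : Matrix (Fin N0) (Fin Nj) ℝ)
    (hγ : IsPartialCouplingMat p0 pj γ)
    (hγopt : ∀ γ', IsPartialCouplingMat p0 pj γ' →
      partialCostMat lam p0 pj x0 xj γ ≤ partialCostMat lam p0 pj x0 xj γ')
    (phat : Fin N0 → ℝ) (hphat : ∀ n, phat n = ∑ m, γ n m)
    (xhat : Fin N0 → EuclideanSpace ℝ (Fin d))
    (hxhat : ∀ n, xhat n =
      if 0 < phat n then (phat n)⁻¹ • ∑ m, γ n m • xj m else x0 n) :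
    ∀ γhat : Matrix (Fin N0) (Fin N0) ℝ,
      (∀ n k, 0 ≤ γhat n k) → (∀ n, ∑ k, γhat n k ≤ p0 n) →
      (∀ k, ∑ n, γhat n k ≤ phat k) →
      (∑ n, phat n * ‖x0 n - xhat n‖ ^ 2) +
          lam * ((∑ n, p0 n) + (∑ n, phat n) - 2 * ∑ n, phat n) ≤
        (∑ n, ∑ k, ‖x0 n - xhat k‖ ^ 2 * γhat n k) +
          lam * ((∑ n, p0 n) + (∑ n, phat n) - 2 * ∑ n, ∑ k, γhat n k) := by
  obtain ⟨hγnn, hγrow, hγcol⟩ := hγ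
  intro γhat hnn hrow hcol
  have hphat_nn : ∀ n, 0 ≤ phat n := fun n =>
    (hphat n) ▸ Finset.sum_nonneg (fun m _ => hγnn n m)
  -- if phat k = 0 then column k of γhat vanishes
  have hz : ∀ n k, ¬ 0 < phat k → γhat n k = 0 := by
    intro n k hk
    have h0 : phat k = 0 := le_antisymm (not_lt.mp hk) (hphat_nn k)
    have h1 : γhat n k ≤ ∑ n', γhat n' k :=
      Finset.single_le_sum (fun i _ => hnn i k) (Finset.mem_univ n)
    have h2 := hcol k
    have h3 := hnn n k
    linarith
  -- if phat k = 0 then row k of γ vanishes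
  have hγz : ∀ k m, ¬ 0 < phat k → γ k m = 0 := by
    intro k m hk
    have h0 : phat k = 0 := le_antisymm (not_lt.mp hk) (hphat_nn k)
    have h1 : γ k m ≤ ∑ m', γ k m' :=
      Finset.single_le_sum (fun i _ => hγnn k i) (Finset.mem_univ m)
    rw [← hphat k, h0] at h1
    exact le_antisymm h1 (hγnn k m)
  -- key barycentric decomposition
  have hkey : ∀ (k : Fin N0) (a : EuclideanSpace ℝ (Fin d)),
      ∑ m, ‖a - xj m‖ ^ 2 * γ k m
        = phat k * ‖a - xhat k‖ ^ 2 + ∑ m, ‖xhat k - xj m‖ ^ 2 * γ k m := by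
    intro k a
    by_cases hk : 0 < phat k
    · have hc : (∑ m, γ k m) • xhat k = ∑ m, γ k m • xj m := by
        rw [hxhat k, if_pos hk, ← hphat k, smul_smul,
          mul_inv_cancel₀ (by rw [hphat k] at hk ⊢; exact ne_of_gt hk), one_smul]
      have hvd := variance_decomp (fun m => γ k m) xj a (xhat k) hc
      rw [hphat k]
      simpa using hvd
    · have h0 : ∀ m, γ k m = 0 := fun m => hγz k m hk
      have hpk0 : phat k = 0 := le_antisymm (not_lt.mp hk) (hphat_nn k)
      simp [h0, hpk0]
  set V : Fin N0 → ℝ := fun k => ∑ m, ‖xhat k - xj m‖ ^ 2 * γ k m with hV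
  have hVnn : ∀ k, 0 ≤ V k := fun k =>
    Finset.sum_nonneg fun m _ => mul_nonneg (by positivity) (hγnn k m)
  -- the composed coupling
  set γ' : Matrix (Fin N0) (Fin Nj) ℝ :=
    fun n m => ∑ k, if 0 < phat k then γhat n k * γ k m / phat k else 0 with hγ'
  have hγ'nn : ∀ n m, 0 ≤ γ' n m := by
    intro n m
    refine Finset.sum_nonneg fun k _ => ?_
    by_cases hk : 0 < phat k
    · rw [if_pos hk]
      exact div_nonneg (mul_nonneg (hnn n k) (hγnn k m)) hk.le
    · rw [if_neg hk]
  -- row sums of γ'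
  have hrowsum : ∀ n, ∑ m, γ' n m = ∑ k, γhat n k := by
    intro n
    have e1 : ∑ m, γ' n m
        = ∑ k, ∑ m, (if 0 < phat k then γhat n k * γ k m / phat k else 0) :=
      Finset.sum_comm
    rw [e1]
    refine Finset.sum_congr rfl fun k _ => ?_
    by_cases hk : 0 < phat k
    · simp only [if_pos hk]
      rw [← Finset.sum_div, ← Finset.mul_sum, ← hphat k,
        mul_div_assoc, div_self hk.ne', mul_one]
    · simp [if_neg hk, hz n k hk]
  -- column sums of γ'
  have hγ'col : ∀ m, ∑ n, γ' n m ≤ pj m := by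
    intro m
    have e1 : ∑ n, γ' n m
        = ∑ k, ∑ n, (if 0 < phat k then γhat n k * γ k m / phat k else 0) :=
      Finset.sum_comm
    rw [e1]
    refine le_trans (Finset.sum_le_sum fun k _ => ?_) (hγcol m)
    by_cases hk : 0 < phat k
    · simp only [if_pos hk]
      rw [← Finset.sum_div, ← Finset.sum_mul, div_le_iff₀ hk]
      have h1 := hcol k
      nlinarith [hγnn k m]
    · simp only [if_neg hk, Finset.sum_const_zero]
      exact hγnn k m
  have hfeas : IsPartialCouplingMat p0 pj γ' :=
    ⟨hγ'nn, fun n => (hrowsum n) ▸ hrow n, hγ'col⟩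
  -- cost of γ'
  have hcost' : ∑ n, ∑ m, ‖x0 n - xj m‖ ^ 2 * γ' n m
      = (∑ n, ∑ k, ‖x0 n - xhat k‖ ^ 2 * γhat n k)
        + ∑ k, (if 0 < phat k then (∑ n, γhat n k) / phat k * V k else 0) := by
    have step : ∀ n, ∑ m, ‖x0 n - xj m‖ ^ 2 * γ' n m
        = ∑ k, (‖x0 n - xhat k‖ ^ 2 * γhat n k
            + (if 0 < phat k then γhat n k / phat k * V k else 0)) := by
      intro n
      have e1 : ∑ m, ‖x0 n - xj m‖ ^ 2 * γ' n m
          = ∑ k, ∑ m, ‖x0 n - xj m‖ ^ 2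
              * (if 0 < phat k then γhat n k * γ k m / phat k else 0) := by
        rw [show ∑ m, ‖x0 n - xj m‖ ^ 2 * γ' n m
            = ∑ m, ∑ k, ‖x0 n - xj m‖ ^ 2
                * (if 0 < phat k then γhat n k * γ k m / phat k else 0) from
          Finset.sum_congr rfl fun m _ => Finset.mul_sum _ _ _]
        exact Finset.sum_comm
      rw [e1]
      refine Finset.sum_congr rfl fun k _ => ?_
      by_cases hk : 0 < phat k
      · simp only [if_pos hk]
        have e2 : ∑ m, ‖x0 n - xj m‖ ^ 2 * (γhat n k * γ k m / phat k)
            = γhat n k / phat k * ∑ m, ‖x0 n - xj m‖ ^ 2 * γ k m := by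
          rw [Finset.mul_sum]
          exact Finset.sum_congr rfl fun m _ => by ring
        rw [e2, hkey k (x0 n)]
        field_simp
        ring
      · simp only [if_neg hk, hz n k hk]
        simp
    rw [show ∑ n, ∑ m, ‖x0 n - xj m‖ ^ 2 * γ' n m
        = ∑ n, ∑ k, (‖x0 n - xhat k‖ ^ 2 * γhat n k
            + (if 0 < phat k then γhat n k / phat k * V k else 0)) from
      Finset.sum_congr rfl fun n _ => step n]
    rw [show (∑ n, ∑ k, (‖x0 n - xhat k‖ ^ 2 * γhat n k
            + (if 0 < phat k then γhat n k / phat k * V k else 0)))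
        = (∑ n, ∑ k, ‖x0 n - xhat k‖ ^ 2 * γhat n k)
          + ∑ n, ∑ k, (if 0 < phat k then γhat n k / phat k * V k else 0) from by
      simp [Finset.sum_add_distrib]]
    congr 1
    rw [Finset.sum_comm]
    refine Finset.sum_congr rfl fun k _ => ?_
    by_cases hk : 0 < phat k
    · simp only [if_pos hk]
      rw [← Finset.sum_mul, ← Finset.sum_div]
    · simp [if_neg hk]
  have hmass' : ∑ n, ∑ m, γ' n m = ∑ n, ∑ k, γhat n k :=
    Finset.sum_congr rfl fun n _ => hrowsum n
  -- cost and mass of γ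
  have hcostγ : ∑ n, ∑ m, ‖x0 n - xj m‖ ^ 2 * γ n m
      = (∑ n, phat n * ‖x0 n - xhat n‖ ^ 2) + ∑ n, V n := by
    rw [← Finset.sum_add_distrib]
    exact Finset.sum_congr rfl fun n _ => hkey n (x0 n)
  have hmassγ : ∑ n, ∑ m, γ n m = ∑ n, phat n :=
    Finset.sum_congr rfl fun n _ => (hphat n).symm
  -- bound on the extra variance term
  have hT : ∑ k, (if 0 < phat k then (∑ n, γhat n k) / phat k * V k else 0)
      ≤ ∑ k, V k := by
    refine Finset.sum_le_sum fun k _ => ?_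
    by_cases hk : 0 < phat k
    · rw [if_pos hk]
      have h1 : (∑ n, γhat n k) / phat k ≤ 1 := (div_le_one hk).mpr (hcol k)
      have h2 : (0:ℝ) ≤ (∑ n, γhat n k) / phat k :=
        div_nonneg (Finset.sum_nonneg fun n _ => hnn n k) hk.le
      nlinarith [hVnn k]
    · rw [if_neg hk]; exact hVnn k
  -- optimality
  have hopt := hγopt γ' hfeas
  unfold partialCostMat at hopt
  rw [hcostγ, hmassγ, hcost', hmass'] at hopt
  nlinarith [hT]
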